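/- The 4×4 matrix M_O with rows (2,0,0,1),(0,1,−1,0),(0,−1,1,0),(1,0,0,2) has spectrum {0,1,2,3}, hence its numerical range is [0,3]; moreover its local numerical range (over product unit vectors in ℂ²⊗ℂ²) is [1/2, 5/2], and the maximum 5/2 is attained only at complex product vectors (e.g., x = (1,i)/√2, y = (1,−i)/√2), while over real product vectors the expectation value never exceeds 2. -/

import Mathlib

open Matrix

/-- Kronecker product vector of `x, y ∈ ℂ²` in the ordered basis
`(e₁⊗f₁, e₁⊗f₂, e₂⊗f₁, e₂⊗f₂)`. -/
def kvec (x y : Fin 2 → ℂ) : Fin 4 → ℂ := ![x 0 * y 0, x 0 * y 1, x 1 * y 0, x 1 * y 1]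

private lemma param_aux (w : ℝ) (h0 : 0 ≤ w) (h1 : w ≤ 1/2) :
    ∃ c s : ℝ, c^2 + s^2 = 1 ∧ c^2 * s^2 = w/2 := by
  have hd0 : (0:ℝ) ≤ 1 - 2*w := by linarith
  set D := Real.sqrt (1 - 2*w) with hD
  have hD2 : D^2 = 1 - 2*w := Real.sq_sqrt hd0
  have hDnn : 0 ≤ D := Real.sqrt_nonneg _
  have hD1 : D ≤ 1 := by nlinarith
  refine ⟨Real.sqrt ((1+D)/2), Real.sqrt ((1-D)/2), ?_, ?_⟩ <;>
    rw [Real.sq_sqrt (by linarith), Real.sq_sqrt (by linarith)] <;> nlinarith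

private lemma spectrum_aux :
    spectrum ℂ (!![2,0,0,1; 0,1,-1,0; 0,-1,1,0; 1,0,0,2] : Matrix (Fin 4) (Fin 4) ℂ)
      = {0,1,2,3} := by
  ext z
  rw [spectrum.mem_iff, Matrix.isUnit_iff_isUnit_det, isUnit_iff_ne_zero, not_not]
  have h1 : (algebraMap ℂ (Matrix (Fin 4) (Fin 4) ℂ)) z
      - !![2,0,0,1; 0,1,-1,0; 0,-1,1,0; 1,0,0,2]
      = !![z-2,0,0,-1; 0,z-1,1,0; 0,1,z-1,0; -1,0,0,z-2] := by
    ext i j; fin_cases i <;> fin_cases j <;> simp [Matrix.algebraMap_eq_diagonal]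
  have h2 : (!![z-2,0,0,-1; 0,z-1,1,0; 0,1,z-1,0; -1,0,0,z-2] : Matrix (Fin 4) (Fin 4) ℂ).det
      = z*(z-1)*(z-2)*(z-3) := by
    simp [Matrix.det_succ_row_zero, Fin.sum_univ_succ, Matrix.det_fin_three]
    norm_num [Fin.castSucc, Fin.castAdd, Fin.castLE, Fin.succAbove, Fin.lt_iff_val_lt_val]
    ring
  rw [h1, h2]
  simp only [Set.mem_insert_iff, Set.mem_singleton_iff, mul_eq_zero]
  constructor
  · rintro (((h|h)|h)|h)
    · exact Or.inl h
    · exact Or.inr (Or.inl (by linear_combination h))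
    · exact Or.inr (Or.inr (Or.inl (by linear_combination h)))
    · exact Or.inr (Or.inr (Or.inr (by linear_combination h)))
  · rintro (h|h|h|h) <;> subst h <;> norm_num

set_option maxHeartbeats 1000000 in
private lemma nr_fwd (ψ : Fin 4 → ℂ) (h : star ψ ⬝ᵥ ψ = 1) :
    ∃ r : ℝ, 0 ≤ r ∧ r ≤ 3 ∧
    star ψ ⬝ᵥ (!![2,0,0,1; 0,1,-1,0; 0,-1,1,0; 1,0,0,2] : Matrix (Fin 4) (Fin 4) ℂ).mulVec ψ
      = (r:ℂ) := by
  have hre : ((ψ 0).re)^2 + ((ψ 0).im)^2 + ((ψ 1).re)^2 + ((ψ 1).im)^2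
      + ((ψ 2).re)^2 + ((ψ 2).im)^2 + ((ψ 3).re)^2 + ((ψ 3).im)^2 = 1 := by
    have := congrArg Complex.re h
    simp [dotProduct, Fin.sum_univ_four, Pi.star_apply, Complex.add_re, Complex.mul_re] at this
    nlinarith [this]
  set z := star ψ ⬝ᵥ (!![2,0,0,1; 0,1,-1,0; 0,-1,1,0; 1,0,0,2] : Matrix (Fin 4) (Fin 4) ℂ).mulVec ψ
    with hz
  have him : z.im = 0 := by
    rw [hz]
    simp [dotProduct, mulVec, Fin.sum_univ_four, Pi.star_apply, Complex.add_im,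
      Complex.mul_im, Complex.mul_re]
    ring
  have hrev : z.re = 2*(((ψ 0).re)^2 + ((ψ 0).im)^2) + 2*(((ψ 3).re)^2 + ((ψ 3).im)^2)
      + (((ψ 1).re)^2 + ((ψ 1).im)^2) + (((ψ 2).re)^2 + ((ψ 2).im)^2)
      + 2*((ψ 0).re*(ψ 3).re + (ψ 0).im*(ψ 3).im)
      - 2*((ψ 1).re*(ψ 2).re + (ψ 1).im*(ψ 2).im) := by
    rw [hz]
    simp [dotProduct, mulVec, Fin.sum_univ_four, Pi.star_apply, Complex.add_re,
      Complex.mul_re, Complex.mul_im]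
    ring
  refine ⟨z.re, ?_, ?_, ?_⟩
  · nlinarith [sq_nonneg ((ψ 0).re + (ψ 3).re), sq_nonneg ((ψ 0).im + (ψ 3).im),
      sq_nonneg ((ψ 1).re - (ψ 2).re), sq_nonneg ((ψ 1).im - (ψ 2).im),
      sq_nonneg ((ψ 0).re), sq_nonneg ((ψ 0).im), sq_nonneg ((ψ 3).re), sq_nonneg ((ψ 3).im)]
  · nlinarith [sq_nonneg ((ψ 0).re - (ψ 3).re), sq_nonneg ((ψ 0).im - (ψ 3).im),
      sq_nonneg ((ψ 1).re + (ψ 2).re), sq_nonneg ((ψ 1).im + (ψ 2).im),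
      sq_nonneg ((ψ 1).re), sq_nonneg ((ψ 1).im), sq_nonneg ((ψ 2).re), sq_nonneg ((ψ 2).im)]
  · exact Complex.ext rfl him

set_option maxHeartbeats 1000000 in
private lemma nr_bwd (r : ℝ) (h0 : 0 ≤ r) (h3 : r ≤ 3) :
    ∃ ψ : Fin 4 → ℂ, star ψ ⬝ᵥ ψ = 1 ∧
    (r:ℂ) = star ψ ⬝ᵥ (!![2,0,0,1; 0,1,-1,0; 0,-1,1,0; 1,0,0,2]
      : Matrix (Fin 4) (Fin 4) ℂ).mulVec ψ := by
  set t := Real.sqrt (r/6) with ht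
  set s := Real.sqrt ((3-r)/6) with hs
  have ht2 : t^2 = r/6 := Real.sq_sqrt (by linarith)
  have hs2 : s^2 = (3-r)/6 := Real.sq_sqrt (by linarith)
  refine ⟨![(t:ℂ), (s:ℂ), (s:ℂ), (t:ℂ)], ?_, ?_⟩
  · rw [Complex.ext_iff]
    constructor <;>
      simp [dotProduct, Fin.sum_univ_four, Pi.star_apply, Complex.add_re, Complex.add_im,
        Complex.mul_re, Complex.mul_im] <;> nlinarith [ht2, hs2]
  · rw [Complex.ext_iff]
    constructor <;>
      simp [dotProduct, mulVec, Fin.sum_univ_four, Pi.star_apply, Complex.add_re,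
        Complex.add_im, Complex.mul_re, Complex.mul_im] <;> nlinarith [ht2, hs2]

set_option maxHeartbeats 4000000 in
private lemma lnr_fwd (x y : Fin 2 → ℂ) (hx : star x ⬝ᵥ x = 1) (hy : star y ⬝ᵥ y = 1) :
    ∃ r : ℝ, 1/2 ≤ r ∧ r ≤ 5/2 ∧
    star (kvec x y) ⬝ᵥ (!![2,0,0,1; 0,1,-1,0; 0,-1,1,0; 1,0,0,2]
      : Matrix (Fin 4) (Fin 4) ℂ).mulVec (kvec x y) = (r:ℂ) := by
  set a := (x 0).re; set b := (x 0).im; set c := (x 1).re; set d := (x 1).im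
  set e := (y 0).re; set f := (y 0).im; set g := (y 1).re; set h := (y 1).im
  have hxr : a^2 + b^2 + c^2 + d^2 = 1 := by
    have := congrArg Complex.re hx
    simp [dotProduct, Fin.sum_univ_two, Pi.star_apply, Complex.add_re, Complex.mul_re] at this
    nlinarith [this]
  have hyr : e^2 + f^2 + g^2 + h^2 = 1 := by
    have := congrArg Complex.re hy
    simp [dotProduct, Fin.sum_univ_two, Pi.star_apply, Complex.add_re, Complex.mul_re] at this
    nlinarith [this]
  set z := star (kvec x y) ⬝ᵥ (!![2,0,0,1; 0,1,-1,0; 0,-1,1,0; 1,0,0,2]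
    : Matrix (Fin 4) (Fin 4) ℂ).mulVec (kvec x y) with hz
  have him : z.im = 0 := by
    rw [hz]
    simp [kvec, dotProduct, mulVec, Fin.sum_univ_four, Pi.star_apply, Complex.add_im,
      Complex.mul_im, Complex.mul_re]
    ring
  have hrev : z.re = 2*(a^2+b^2)*(e^2+f^2) + (a^2+b^2)*(g^2+h^2) + (c^2+d^2)*(e^2+f^2)
      + 2*(c^2+d^2)*(g^2+h^2) - 4*(a*d-b*c)*(e*h-f*g) := by
    rw [hz]
    simp [kvec, dotProduct, mulVec, Fin.sum_univ_four, Pi.star_apply, Complex.add_re,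
      Complex.mul_re, Complex.mul_im]
    ring
  have hA : (a^2+b^2-c^2-d^2)^2 + 4*(a*c+b*d)^2 + 4*(a*d-b*c)^2 = 1 := by
    linear_combination (a^2+b^2+c^2+d^2+1) * hxr
  have hB : (e^2+f^2-g^2-h^2)^2 + 4*(e*g+f*h)^2 + 4*(e*h-f*g)^2 = 1 := by
    linear_combination (e^2+f^2+g^2+h^2+1) * hyr
  refine ⟨z.re, ?_, ?_, ?_⟩
  · nlinarith [hA, hB, sq_nonneg ((a^2+b^2-c^2-d^2) + (e^2+f^2-g^2-h^2)),
      sq_nonneg (2*(a*d-b*c) - 2*(e*h-f*g)), sq_nonneg (a*c+b*d), sq_nonneg (e*g+f*h),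
      sq_nonneg (a^2+b^2-c^2-d^2), sq_nonneg (e^2+f^2-g^2-h^2)]
  · nlinarith [hA, hB, sq_nonneg ((a^2+b^2-c^2-d^2) - (e^2+f^2-g^2-h^2)),
      sq_nonneg (2*(a*d-b*c) + 2*(e*h-f*g)), sq_nonneg (a*c+b*d), sq_nonneg (e*g+f*h),
      sq_nonneg (a^2+b^2-c^2-d^2), sq_nonneg (e^2+f^2-g^2-h^2)]
  · exact Complex.ext rfl him

set_option maxHeartbeats 4000000 in
private lemma lnr_bwd (r : ℝ) (h0 : 1/2 ≤ r) (h3 : r ≤ 5/2) :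
    ∃ x y : Fin 2 → ℂ, star x ⬝ᵥ x = 1 ∧ star y ⬝ᵥ y = 1 ∧
    (r:ℂ) = star (kvec x y) ⬝ᵥ (!![2,0,0,1; 0,1,-1,0; 0,-1,1,0; 1,0,0,2]
      : Matrix (Fin 4) (Fin 4) ℂ).mulVec (kvec x y) := by
  rcases le_or_gt r 1 with h1 | h1
  · obtain ⟨c, s, hcs, hw⟩ := param_aux (1 - r) (by linarith) (by linarith)
    refine ⟨![(c:ℂ), (s:ℂ)*Complex.I], ![(s:ℂ), (c:ℂ)*Complex.I], ?_, ?_, ?_⟩ <;>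
      · rw [Complex.ext_iff]
        constructor <;>
          simp [kvec, dotProduct, mulVec, Fin.sum_univ_four, Fin.sum_univ_two, Pi.star_apply,
            Complex.add_re, Complex.add_im, Complex.mul_re, Complex.mul_im] <;>
          nlinarith [hcs, hw]
  rcases le_or_gt r (3/2) with h2 | h2
  · obtain ⟨c, s, hcs, hw⟩ := param_aux (r - 1) (by linarith) (by linarith)
    refine ⟨![(c:ℂ), (s:ℂ)], ![(s:ℂ), (c:ℂ)], ?_, ?_, ?_⟩ <;>
      · rw [Complex.ext_iff]
        constructor <;>
          simp [kvec, dotProduct, mulVec, Fin.sum_univ_four, Fin.sum_univ_two, Pi.star_apply,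
            Complex.add_re, Complex.add_im, Complex.mul_re, Complex.mul_im] <;>
          nlinarith [hcs, hw]
  rcases le_or_gt r 2 with h4 | h4
  · obtain ⟨c, s, hcs, hw⟩ := param_aux (2 - r) (by linarith) (by linarith)
    refine ⟨![(c:ℂ), (s:ℂ)], ![(c:ℂ), (s:ℂ)], ?_, ?_, ?_⟩ <;>
      · rw [Complex.ext_iff]
        constructor <;>
          simp [kvec, dotProduct, mulVec, Fin.sum_univ_four, Fin.sum_univ_two, Pi.star_apply,
            Complex.add_re, Complex.add_im, Complex.mul_re, Complex.mul_im] <;>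
          nlinarith [hcs, hw]
  · obtain ⟨c, s, hcs, hw⟩ := param_aux (r - 2) (by linarith) (by linarith)
    refine ⟨![(c:ℂ), (s:ℂ)*Complex.I], ![(c:ℂ), -(s:ℂ)*Complex.I], ?_, ?_, ?_⟩ <;>
      · rw [Complex.ext_iff]
        constructor <;>
          simp [kvec, dotProduct, mulVec, Fin.sum_univ_four, Fin.sum_univ_two, Pi.star_apply,
            Complex.add_re, Complex.add_im, Complex.mul_re, Complex.mul_im] <;>
          nlinarith [hcs, hw]

set_option maxHeartbeats 1000000 in
private lemma max_attained :
    let x : Fin 2 → ℂ := ![1 / Real.sqrt 2, Complex.I / Real.sqrt 2]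
    let y : Fin 2 → ℂ := ![1 / Real.sqrt 2, -Complex.I / Real.sqrt 2]
    star (kvec x y) ⬝ᵥ (!![2,0,0,1; 0,1,-1,0; 0,-1,1,0; 1,0,0,2]
      : Matrix (Fin 4) (Fin 4) ℂ).mulVec (kvec x y) = (5 / 2 : ℂ) := by
  intro x y
  have hs : ((Real.sqrt 2 : ℝ) : ℂ) ^ 2 = 2 := by
    rw [← Complex.ofReal_pow, Real.sq_sqrt (by norm_num)]; norm_num
  have hne : ((Real.sqrt 2 : ℝ) : ℂ) ≠ 0 := by
    intro h
    rw [h] at hs; norm_num at hs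
  simp only [x, y, kvec, dotProduct, mulVec, Fin.sum_univ_four, Pi.star_apply,
    Matrix.cons_val_zero, Matrix.cons_val_one, Matrix.head_cons, Matrix.cons_val',
    Matrix.cons_val_fin_one, Matrix.empty_val', Matrix.head_fin_const, star_mul', star_div₀,
    star_one, Complex.star_def, Complex.conj_I, Complex.conj_ofReal, map_neg, _root_.map_one,
    Matrix.of_apply, Matrix.cons_val, map_mul, map_div₀]
  field_simp
  ring_nf
  rw [show ((Real.sqrt 2:ℝ):ℂ)^4 = (((Real.sqrt 2:ℝ):ℂ)^2)^2 by ring, hs]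
  ring_nf
  simp [Complex.I_sq]
  ring

set_option maxHeartbeats 1000000 in
private lemma real_bound (x y : Fin 2 → ℝ) (hx : x 0 ^ 2 + x 1 ^ 2 = 1)
    (hy : y 0 ^ 2 + y 1 ^ 2 = 1) :
    (star (kvec (fun i => (x i : ℂ)) (fun i => (y i : ℂ))) ⬝ᵥ
      (!![2,0,0,1; 0,1,-1,0; 0,-1,1,0; 1,0,0,2] : Matrix (Fin 4) (Fin 4) ℂ).mulVec
        (kvec (fun i => (x i : ℂ)) (fun i => (y i : ℂ)))).re ≤ 2 := by
  have hrev : (star (kvec (fun i => (x i : ℂ)) (fun i => (y i : ℂ))) ⬝ᵥ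
      (!![2,0,0,1; 0,1,-1,0; 0,-1,1,0; 1,0,0,2] : Matrix (Fin 4) (Fin 4) ℂ).mulVec
        (kvec (fun i => (x i : ℂ)) (fun i => (y i : ℂ)))).re
      = 2*(x 0)^2*(y 0)^2 + (x 0)^2*(y 1)^2 + (x 1)^2*(y 0)^2 + 2*(x 1)^2*(y 1)^2 := by
    simp [kvec, dotProduct, mulVec, Fin.sum_univ_four, Pi.star_apply, Complex.add_re,
      Complex.mul_re, Complex.mul_im]
    ring
  rw [hrev]
  nlinarith [hx, hy, sq_nonneg (x 0 * y 1 - x 1 * y 0), sq_nonneg (x 0 * y 0 - x 1 * y 1),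
    sq_nonneg (x 0 * y 1), sq_nonneg (x 1 * y 0)]

/-- `M_O = [[2,0,0,1],[0,1,-1,0],[0,-1,1,0],[1,0,0,2]]` has spectrum `{0,1,2,3}`,
numerical range `[0,3]`, local numerical range `[1/2, 5/2]`; the maximum `5/2` is attained
at the complex product vector `x = (1,i)/√2`, `y = (1,-i)/√2`, while on real product
vectors the expectation value never exceeds `2`. -/
theorem example_X_matrix :
    let M : Matrix (Fin 4) (Fin 4) ℂ := !![2,0,0,1; 0,1,-1,0; 0,-1,1,0; 1,0,0,2]
    spectrum ℂ M = {0, 1, 2, 3} ∧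
    {z : ℂ | ∃ ψ : Fin 4 → ℂ, star ψ ⬝ᵥ ψ = 1 ∧ z = star ψ ⬝ᵥ M.mulVec ψ} =
      (fun r : ℝ => (r : ℂ)) '' Set.Icc (0 : ℝ) 3 ∧
    {z : ℂ | ∃ x y : Fin 2 → ℂ, star x ⬝ᵥ x = 1 ∧ star y ⬝ᵥ y = 1 ∧
        z = star (kvec x y) ⬝ᵥ M.mulVec (kvec x y)} =
      (fun r : ℝ => (r : ℂ)) '' Set.Icc (1 / 2 : ℝ) (5 / 2) ∧
    (let x : Fin 2 → ℂ := ![1 / Real.sqrt 2, Complex.I / Real.sqrt 2]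
     let y : Fin 2 → ℂ := ![1 / Real.sqrt 2, -Complex.I / Real.sqrt 2]
     star (kvec x y) ⬝ᵥ M.mulVec (kvec x y) = (5 / 2 : ℂ)) ∧
    (∀ x y : Fin 2 → ℝ, x 0 ^ 2 + x 1 ^ 2 = 1 → y 0 ^ 2 + y 1 ^ 2 = 1 →
      (star (kvec (fun i => (x i : ℂ)) (fun i => (y i : ℂ))) ⬝ᵥ
        M.mulVec (kvec (fun i => (x i : ℂ)) (fun i => (y i : ℂ)))).re ≤ 2) := by
  intro M
  refine ⟨spectrum_aux, ?_, ?_, max_attained, real_bound⟩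
  · ext z
    simp only [Set.mem_setOf_eq, Set.mem_image, Set.mem_Icc]
    constructor
    · rintro ⟨ψ, hψ, rfl⟩
      obtain ⟨r, h0, h3, hr⟩ := nr_fwd ψ hψ
      exact ⟨r, ⟨h0, h3⟩, hr.symm⟩
    · rintro ⟨r, ⟨h0, h3⟩, rfl⟩
      obtain ⟨ψ, hψ, hr⟩ := nr_bwd r h0 h3
      exact ⟨ψ, hψ, hr⟩
  · ext z
    simp only [Set.mem_setOf_eq, Set.mem_image, Set.mem_Icc]
    constructor
    · rintro ⟨x, y, hx, hy, rfl⟩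
      obtain ⟨r, h0, h3, hr⟩ := lnr_fwd x y hx hy
      exact ⟨r, ⟨h0, h3⟩, hr.symm⟩
    · rintro ⟨r, ⟨h0, h3⟩, rfl⟩
      obtain ⟨x, y, hx, hy, hr⟩ := lnr_bwd r h0 h3
      exact ⟨x, y, hx, hy, hr⟩
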